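/- Let n ≥ 2 and let D be a non-atomic probability distribution supported on [0,1] with mean μ and variance Var(D). Let X_1, ..., X_n be i.i.d. random variables drawn from D (the disutilities of a single chore for n agents), and define μ* = E[X_1 · 1{X_1 = min(X_1,...,X_n)}] and μ' = E[X_1 · 1{X_2 = min(X_1,...,X_n)}]. Then μ* ≤ (μ − Var(D))/n and μ' ≥ μ/n. -/

import Mathlib

open MeasureTheory ProbabilityTheory

set_option maxHeartbeats 1000000 in
/-- Let `X 0, ..., X (n-1)` be i.i.d. draws from a non-atomic distribution `D` on `[0,1]`
with mean `μ` and variance `V`. Let `μstar` be the expectation of `X 0` on the event that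
`X 0` is the minimum, and `μ'` the expectation of `X 0` on the event that `X 1` is the
minimum. Then `μstar ≤ (μ - V)/n` and `μ' ≥ μ/n`. -/
theorem min_cost_expectations (n : ℕ) (hn : 2 ≤ n)
    (D : Measure ℝ) [IsProbabilityMeasure D]
    (hatom : ∀ x : ℝ, D {x} = 0) (hsupp : D (Set.Icc (0 : ℝ) 1)ᶜ = 0)
    {Ω : Type*} [MeasurableSpace Ω] (P : Measure Ω) [IsProbabilityMeasure P]
    (X : Fin n → Ω → ℝ) (hmeas : ∀ i, Measurable (X i))
    (hindep : iIndepFun X P)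
    (hdist : ∀ i, Measure.map (X i) P = D)
    (μ V μstar μ' : ℝ)
    (hμ : μ = ∫ x, x ∂D)
    (hV : V = ∫ x, (x - μ) ^ 2 ∂D)
    (hμstar : μstar = ∫ ω,
      ({ω | ∀ i, X ⟨0, by omega⟩ ω ≤ X i ω}.indicator (fun ω => X ⟨0, by omega⟩ ω)) ω ∂P)
    (hμ' : μ' = ∫ ω,
      ({ω | ∀ i, X ⟨1, by omega⟩ ω ≤ X i ω}.indicator (fun ω => X ⟨0, by omega⟩ ω)) ω ∂P) :
    μstar ≤ (μ - V) / n ∧ μ / n ≤ μ' := by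
  classical
  set i0 : Fin n := ⟨0, by omega⟩ with hi0def
  set i1 : Fin n := ⟨1, by omega⟩ with hi1def
  have hi01 : i0 ≠ i1 := by simp [hi0def, hi1def, Fin.ext_iff]
  set A : Fin n → Set Ω := fun j => {ω | ∀ i, X j ω ≤ X i ω} with hAdef
  set g : Fin n → Fin n → Ω → ℝ := fun j k => (A j).indicator (X k) with hgdef
  have hμstar' : μstar = ∫ ω, g i0 i0 ω ∂P := hμstar
  have hμ'2 : μ' = ∫ ω, g i1 i0 ω ∂P := hμ'
  have mA : ∀ j, MeasurableSet (A j) := by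
    intro j
    have : A j = ⋂ i, {ω | X j ω ≤ X i ω} := by ext ω; simp [hAdef]
    rw [this]
    exact MeasurableSet.iInter fun i => measurableSet_le (hmeas j) (hmeas i)
  have mg : ∀ j k, Measurable (g j k) := fun j k => (hmeas k).indicator (mA j)
  -- a.e. bounds
  have hae : ∀ᵐ ω ∂P, ∀ i, X i ω ∈ Set.Icc (0:ℝ) 1 := by
    rw [ae_all_iff]
    intro i
    rw [ae_iff]
    have : {ω | ¬ X i ω ∈ Set.Icc (0:ℝ) 1} = X i ⁻¹' (Set.Icc (0:ℝ) 1)ᶜ := rfl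
    rw [this, ← Measure.map_apply (hmeas i) measurableSet_Icc.compl, hdist i]
    exact hsupp
  have hXint : ∀ k, Integrable (X k) P := by
    intro k
    refine Integrable.mono' (integrable_const 1) (hmeas k).aestronglyMeasurable ?_
    filter_upwards [hae] with ω h
    rw [Real.norm_eq_abs, abs_le]
    exact ⟨by linarith [(h k).1], (h k).2⟩
  have hgint : ∀ j k, Integrable (g j k) P := by
    intro j k
    refine Integrable.mono' (integrable_const 1) (mg j k).aestronglyMeasurable ?_
    filter_upwards [hae] with ω h
    calc ‖g j k ω‖ ≤ ‖X k ω‖ := norm_indicator_le_norm_self _ _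
    _ ≤ 1 := by rw [Real.norm_eq_abs, abs_le]; exact ⟨by linarith [(h k).1], (h k).2⟩
  -- transfer to the product measure
  set ν : Measure (Fin n → ℝ) := Measure.pi fun _ => D with hνdef
  set φ : Ω → (Fin n → ℝ) := fun ω i => X i ω with hφdef
  have hφ : Measurable φ := measurable_pi_lambda _ hmeas
  have hmap : Measure.map φ P = ν := by
    refine (Measure.pi_eq fun s hs => ?_).symm
    rw [Measure.map_apply hφ (MeasurableSet.univ_pi hs)]
    have hpre : φ ⁻¹' Set.univ.pi s = ⋂ i, X i ⁻¹' s i := by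
      ext ω; simp [hφdef, Set.mem_univ_pi]
    rw [hpre, hindep.meas_iInter (fun i => ⟨s i, hs i, rfl⟩)]
    exact Finset.prod_congr rfl fun i _ => by
      rw [← hdist i, Measure.map_apply (hmeas i) (hs i)]
  set F : Fin n → Fin n → (Fin n → ℝ) → ℝ :=
    fun j k => {x : Fin n → ℝ | ∀ i, x j ≤ x i}.indicator (fun x => x k) with hFdef
  have mF : ∀ j k, Measurable (F j k) := by
    intro j k
    have hS : MeasurableSet {x : Fin n → ℝ | ∀ i, x j ≤ x i} := by
      have : {x : Fin n → ℝ | ∀ i, x j ≤ x i} = ⋂ i, {x : Fin n → ℝ | x j ≤ x i} := by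
        ext x; simp
      rw [this]
      exact MeasurableSet.iInter fun i =>
        measurableSet_le (measurable_pi_apply j) (measurable_pi_apply i)
    exact (measurable_pi_apply k).indicator hS
  have htrans : ∀ j k, ∫ ω, g j k ω ∂P = ∫ x, F j k x ∂ν := by
    intro j k
    rw [← hmap, integral_map hφ.aemeasurable (mF j k).aestronglyMeasurable]
    rfl
  have hgperm : ∀ (τ : Equiv.Perm (Fin n)) (j k : Fin n),
      ∫ ω, g j k ω ∂P = ∫ ω, g (τ j) (τ k) ω ∂P := by
    intro τ j k
    rw [htrans, htrans]
    set e : (Fin n → ℝ) ≃ᵐ (Fin n → ℝ) :=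
      MeasurableEquiv.piCongrLeft (fun _ => ℝ) τ with hedef
    have hpres : MeasurePreserving e ν ν :=
      measurePreserving_piCongrLeft (fun _ => D) τ
    have he : ∀ (x : Fin n → ℝ) (i : Fin n), e x i = x (τ.symm i) := by
      intro x i
      have h1 := Equiv.piCongrLeft_apply_apply (fun _ => ℝ) τ x (τ.symm i)
      have h2 : e x = Equiv.piCongrLeft (fun _ => ℝ) τ x := by
        rw [hedef, MeasurableEquiv.coe_piCongrLeft]
      rw [h2]
      simpa using h1
    have hcomp : ∀ x, F (τ j) (τ k) (e x) = F j k x := by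
      intro x
      simp only [hFdef, Set.indicator_apply, Set.mem_setOf_eq, he,
        Equiv.symm_apply_apply]
      congr 1
      simp only [eq_iff_iff]
      constructor
      · intro h i
        have := h (τ i)
        rwa [Equiv.symm_apply_apply] at this
      · intro h i; exact h _
    calc ∫ x, F j k x ∂ν = ∫ x, F (τ j) (τ k) (e x) ∂ν := by simp_rw [hcomp]
    _ = ∫ x, F (τ j) (τ k) x ∂ν := hpres.integral_comp' (F (τ j) (τ k))
  -- symmetry consequences
  have hsym1 : ∀ j, ∫ ω, g j j ω ∂P = μstar := by
    intro j
    rw [hgperm (Equiv.swap j i0) j j, Equiv.swap_apply_left, hμstar']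
  have hsym2 : ∫ ω, g i0 i1 ω ∂P = μ' := by
    rw [hgperm (Equiv.swap i0 i1) i0 i1, Equiv.swap_apply_left,
      Equiv.swap_apply_right, hμ'2]
  have hsym3 : ∀ j, j ≠ i0 → ∫ ω, g j i0 ω ∂P = μ' := by
    intro j hj
    rw [hgperm (Equiv.swap j i1) j i0, Equiv.swap_apply_left,
      Equiv.swap_apply_of_ne_of_ne (Ne.symm hj) hi01, hμ'2]
  -- ties are null
  have hdist2 : ∀ (i j : Fin n), i ≠ j → P {ω | X i ω = X j ω} = 0 := by
    intro i j hij
    have hpair : Measure.map (fun ω => (X i ω, X j ω)) P = D.prod D := by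
      rw [(indepFun_iff_map_prod_eq_prod_map_map (hmeas i).aemeasurable
        (hmeas j).aemeasurable).mp (hindep.indepFun hij), hdist i, hdist j]
    have mD : MeasurableSet {p : ℝ × ℝ | p.1 = p.2} :=
      measurableSet_eq_fun measurable_fst measurable_snd
    have hset : {ω | X i ω = X j ω}
        = (fun ω => (X i ω, X j ω)) ⁻¹' {p : ℝ × ℝ | p.1 = p.2} := rfl
    rw [hset, ← Measure.map_apply ((hmeas i).prodMk (hmeas j)) mD, hpair,
      Measure.prod_apply mD]
    have hfib : ∀ x : ℝ, (Prod.mk x ⁻¹' {p : ℝ × ℝ | p.1 = p.2}) = {x} := by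
      intro x; ext y; simp [eq_comm]
    simp [hfib, hatom]
  have hne : ∀ᵐ ω ∂P, ∀ i j : Fin n, i ≠ j → X i ω ≠ X j ω := by
    rw [ae_all_iff]; intro i; rw [ae_all_iff]; intro j
    by_cases hij : i = j
    · filter_upwards with ω h; exact absurd hij h
    · rw [ae_iff]
      refine measure_mono_null ?_ (hdist2 i j hij)
      intro ω hω
      simp only [Set.mem_setOf_eq, Classical.not_imp, not_not] at hω
      exact hω.2
  -- pointwise a.e. key facts
  have hN : Nonempty (Fin n) := ⟨i0⟩
  have hkey : ∀ᵐ ω ∂P, (∑ j, g j i0 ω = X i0 ω) ∧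
      (∑ j, g j j ω ≤ (X i0 ω + X i1 ω - (X i0 ω - X i1 ω)^2)/2) := by
    filter_upwards [hae, hne] with ω hr hd
    obtain ⟨j₀, hj₀⟩ := Finite.exists_min (fun i => X i ω)
    have huniq : ∀ j, ω ∈ A j → j = j₀ := by
      intro j hj
      by_contra hne'
      exact hd j j₀ hne' (le_antisymm (hj j₀) (hj₀ j))
    have hmem : ω ∈ A j₀ := hj₀
    constructor
    · rw [Finset.sum_eq_single j₀]
      · exact Set.indicator_of_mem hmem (X i0)
      · intro j _ hj
        exact Set.indicator_of_notMem (fun h => hj (huniq j h)) (X i0)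
      · intro h; exact absurd (Finset.mem_univ j₀) h
    · have hs : ∑ j, g j j ω = X j₀ ω := by
        rw [Finset.sum_eq_single j₀]
        · exact Set.indicator_of_mem hmem (X j₀)
        · intro j _ hj
          exact Set.indicator_of_notMem (fun h => hj (huniq j h)) (X j)
        · intro h; exact absurd (Finset.mem_univ j₀) h
      rw [hs]
      have h0 := hj₀ i0
      have h1 := hj₀ i1
      have ha := hr i0
      have hb := hr i1
      simp only [Set.mem_Icc] at ha hb
      nlinarith [mul_nonneg (sub_nonneg.2 h0) (sub_nonneg.2 (by linarith [ha.2, hb.1] :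
          X i0 ω - X i1 ω ≤ 1)),
        mul_nonneg (sub_nonneg.2 h1) (sub_nonneg.2 (by linarith [hb.2, ha.1] :
          X i1 ω - X i0 ω ≤ 1))]
  -- integral computations
  have hDae : ∀ᵐ x ∂D, x ∈ Set.Icc (0:ℝ) 1 := by
    rw [ae_iff]; exact hsupp
  have hDid : Integrable (fun x : ℝ => x) D := by
    refine Integrable.mono' (integrable_const 1) aestronglyMeasurable_id ?_
    filter_upwards [hDae] with x hx
    rw [Real.norm_eq_abs, abs_le]; exact ⟨by linarith [hx.1], hx.2⟩
  have hDsq : Integrable (fun x : ℝ => x^2) D := by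
    refine Integrable.mono' (integrable_const 1)
      (measurable_id.pow_const 2).aestronglyMeasurable ?_
    filter_upwards [hDae] with x hx
    rw [Real.norm_eq_abs, abs_le]
    constructor <;> nlinarith [hx.1, hx.2]
  have hVeq : V = (∫ x, x^2 ∂D) - μ^2 := by
    rw [hV]
    have hexp : ∀ x : ℝ, (x - μ)^2 = x^2 - (2*μ)*x + μ^2 := fun x => by ring
    simp_rw [hexp]
    rw [integral_add (f := fun x : ℝ => x^2 - (2*μ)*x)
        (hDsq.sub (hDid.const_mul (2*μ))) (integrable_const _),
      integral_sub (f := fun x : ℝ => x^2) (g := fun x : ℝ => (2*μ)*x) hDsq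
        (hDid.const_mul (2*μ)), integral_const_mul _ _,
      integral_const, ← hμ]
    simp [measure_univ]
    ring
  have hEX : ∀ k, ∫ ω, X k ω ∂P = μ := by
    intro k
    rw [hμ, ← hdist k, integral_map (f := fun x : ℝ => x) (hmeas k).aemeasurable
      aestronglyMeasurable_id]
  have hEXsq : ∀ k, ∫ ω, (X k ω)^2 ∂P = ∫ x, x^2 ∂D := by
    intro k
    rw [← hdist k, integral_map (f := fun x : ℝ => x^2) (hmeas k).aemeasurable
      (measurable_id.pow_const 2).aestronglyMeasurable]
  have hXsqint : ∀ k, Integrable (fun ω => (X k ω)^2) P := by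
    intro k
    refine Integrable.mono' (integrable_const 1)
      ((hmeas k).pow_const 2).aestronglyMeasurable ?_
    filter_upwards [hae] with ω h
    have := h k
    simp only [Set.mem_Icc] at this
    rw [Real.norm_eq_abs, abs_le]
    constructor <;> nlinarith [this.1, this.2]
  have hXprodint : Integrable (fun ω => X i0 ω * X i1 ω) P := by
    refine Integrable.mono' (integrable_const 1)
      ((hmeas i0).mul (hmeas i1)).aestronglyMeasurable ?_
    filter_upwards [hae] with ω h
    have h0 := h i0; have h1 := h i1
    simp only [Set.mem_Icc] at h0 h1
    rw [Real.norm_eq_abs, abs_le]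
    constructor <;> nlinarith [h0.1, h0.2, h1.1, h1.2]
  have hEprod : ∫ ω, X i0 ω * X i1 ω ∂P = μ * μ := by
    have h := (hindep.indepFun hi01).integral_mul_eq_mul_integral (hXint i0).aestronglyMeasurable (hXint i1).aestronglyMeasurable
    calc ∫ ω, X i0 ω * X i1 ω ∂P = ∫ ω, (X i0 * X i1) ω ∂P := rfl
    _ = (∫ ω, X i0 ω ∂P) * ∫ ω, X i1 ω ∂P := h
    _ = μ * μ := by rw [hEX, hEX]
  have hsq_int : Integrable (fun ω => (X i0 ω - X i1 ω)^2) P := by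
    refine Integrable.mono' (integrable_const 1)
      (((hmeas i0).sub (hmeas i1)).pow_const 2).aestronglyMeasurable ?_
    filter_upwards [hae] with ω h
    have h0 := h i0; have h1 := h i1
    simp only [Set.mem_Icc] at h0 h1
    rw [Real.norm_eq_abs, abs_le]
    constructor <;> nlinarith [h0.1, h0.2, h1.1, h1.2]
  have hEsq : ∫ ω, (X i0 ω - X i1 ω)^2 ∂P = 2*(∫ x, x^2 ∂D) - 2*μ^2 := by
    have hexp : ∀ ω, (X i0 ω - X i1 ω)^2
        = (X i0 ω)^2 + (X i1 ω)^2 - 2*(X i0 ω * X i1 ω) := fun ω => by ring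
    simp_rw [hexp]
    rw [integral_sub (f := fun ω => (X i0 ω)^2 + (X i1 ω)^2)
        (g := fun ω => 2*(X i0 ω * X i1 ω))
        ((hXsqint i0).add (hXsqint i1)) (hXprodint.const_mul 2),
      integral_add (hXsqint i0) (hXsqint i1), integral_const_mul _ _, hEprod,
      hEXsq, hEXsq]
    ring
  have hnpos : (0:ℝ) < n := by
    have : (2:ℝ) ≤ n := by exact_mod_cast hn
    linarith
  -- part 1
  have hRHSint : Integrable
      (fun ω => (X i0 ω + X i1 ω - (X i0 ω - X i1 ω)^2)/2) P :=
    (((hXint i0).add (hXint i1)).sub hsq_int).div_const 2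
  have e1 : (n:ℝ) * μstar = ∫ ω, ∑ j, g j j ω ∂P := by
    rw [integral_finset_sum _ (fun j _ => hgint j j)]
    simp [hsym1, Finset.sum_const, Finset.card_univ, nsmul_eq_mul]
  have e2 : ∫ ω, ∑ j, g j j ω ∂P
      ≤ ∫ ω, (X i0 ω + X i1 ω - (X i0 ω - X i1 ω)^2)/2 ∂P := by
    refine integral_mono_ae (integrable_finset_sum _ fun j _ => hgint j j) hRHSint ?_
    filter_upwards [hkey] with ω h
    exact h.2
  have e3 : ∫ ω, (X i0 ω + X i1 ω - (X i0 ω - X i1 ω)^2)/2 ∂P = μ - V := by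
    rw [integral_div, integral_sub (f := fun ω => X i0 ω + X i1 ω)
        (g := fun ω => (X i0 ω - X i1 ω)^2) ((hXint i0).add (hXint i1)) hsq_int,
      integral_add (hXint i0) (hXint i1), hEX, hEX, hEsq, hVeq]
    ring
  have part1 : μstar ≤ (μ - V) / n := by
    rw [le_div_iff₀ hnpos]
    have := e1.symm ▸ (e3 ▸ e2)
    linarith [this]
  -- part 2
  have hpart2 : μ = μstar + ((n:ℝ) - 1) * μ' := by
    have f1 : μ = ∫ ω, ∑ j, g j i0 ω ∂P := by
      rw [← hEX i0]
      exact (integral_congr_ae (by filter_upwards [hkey] with ω h; exact h.1)).symm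
    rw [f1, integral_finset_sum _ (fun j _ => hgint j i0),
      ← Finset.add_sum_erase _ _ (Finset.mem_univ i0)]
    have f2 : ∑ j ∈ Finset.univ.erase i0, ∫ ω, g j i0 ω ∂P = ((n:ℝ)-1) * μ' := by
      rw [Finset.sum_congr rfl (fun j hj => hsym3 j (Finset.ne_of_mem_erase hj)),
        Finset.sum_const, Finset.card_erase_of_mem (Finset.mem_univ i0),
        Finset.card_univ, Fintype.card_fin, nsmul_eq_mul]
      congr 1
      rw [Nat.cast_sub (by omega)]
      simp
    rw [f2, ← hμstar']
  have hμsμ' : μstar ≤ μ' := by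
    rw [hμstar', ← hsym2]
    refine integral_mono (hgint i0 i0) (hgint i0 i1) ?_
    intro ω
    by_cases h : ω ∈ A i0
    · rw [hgdef]
      simp only
      rw [Set.indicator_of_mem h, Set.indicator_of_mem h]
      exact h i1
    · rw [hgdef]
      simp only
      rw [Set.indicator_of_notMem h, Set.indicator_of_notMem h]
  have part2 : μ / n ≤ μ' := by
    rw [div_le_iff₀ hnpos]
    nlinarith [hpart2, hμsμ']
  exact ⟨part1, part2⟩
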